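/- Let B be a stacked 3-ball and let t be an interior triangle of B (a triangle contained in two tetrahedra of B). Then the induced subcomplex B[V(B) \ t] on the vertices of B not lying in t has exactly two connected components. Moreover, if u and v are the apices of the two tetrahedra of B containing t, then u and v lie in different components of B[V(B) \ t]. -/

import Mathlib

namespace PachnerSpheres

open Finset

/-- A triangulated 2-sphere on the vertex set `Fin n`, given by its set of
triangles: a pure 2-dimensional complex in which every edge lies in exactly two
triangles, all vertex links are connected (hence cycles), the complex is
connected, and the Euler characteristic is 2. -/
structure Sphere2 (n : ℕ) where
  faces : Finset (Finset (Fin n))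
  card_three : ∀ t ∈ faces, t.card = 3
  covers : ∀ v : Fin n, ∃ t ∈ faces, v ∈ t
  edge_two : ∀ t ∈ faces, ∀ e ⊆ t, e.card = 2 →
    (faces.filter fun t' => e ⊆ t').card = 2
  link_conn : ∀ v a b : Fin n,
    (∃ t ∈ faces, v ∈ t ∧ a ∈ t ∧ a ≠ v) →
    (∃ t ∈ faces, v ∈ t ∧ b ∈ t ∧ b ≠ v) →
    Relation.ReflTransGen
      (fun x y : Fin n => x ≠ y ∧ ({v, x, y} : Finset (Fin n)) ∈ faces) a b
  conn : ∀ a b : Fin n,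
    Relation.ReflTransGen
      (fun x y : Fin n => x ≠ y ∧ ∃ t ∈ faces, x ∈ t ∧ y ∈ t) a b
  euler : n + faces.card = (faces.biUnion fun t => t.powersetCard 2).card + 2

variable {n : ℕ}

namespace Sphere2

/-- The edges of a triangulated 2-sphere. -/
def edges (S : Sphere2 n) : Finset (Finset (Fin n)) :=
  S.faces.biUnion fun t => t.powersetCard 2

/-- `u` and `v` are joined by an edge of `S`. -/
def HasEdge (S : Sphere2 n) (u v : Fin n) : Prop :=
  u ≠ v ∧ ({u, v} : Finset (Fin n)) ∈ S.edges

instance (S : Sphere2 n) : DecidableRel S.HasEdge := fun u v =>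
  decidable_of_iff (u ≠ v ∧ ({u, v} : Finset (Fin n)) ∈ S.edges) Iff.rfl

/-- The degree of a vertex: the number of edges containing it. -/
def degree (S : Sphere2 n) (v : Fin n) : ℕ :=
  (S.edges.filter fun e => v ∈ e).card

/-- Combinatorial isomorphism of triangulated 2-spheres. -/
def Iso (S T : Sphere2 n) : Prop :=
  ∃ σ : Equiv.Perm (Fin n), T.faces = S.faces.image (Finset.image σ)

end Sphere2

/-- The face set obtained from `F` by the edge flip `ab ↦ cd`. -/
def flipFaces (F : Finset (Finset (Fin n))) (a b c d : Fin n) :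
    Finset (Finset (Fin n)) :=
  (F \ {{a, b, c}, {a, b, d}}) ∪ {{a, c, d}, {b, c, d}}

/-- `IsFlipOf S T a b c d` : `T` is obtained from `S` by the (admissible)
edge flip `ab ↦ cd`. -/
def IsFlipOf (S T : Sphere2 n) (a b c d : Fin n) : Prop :=
  c ≠ d ∧ ({a, b, c} : Finset (Fin n)) ∈ S.faces ∧
    ({a, b, d} : Finset (Fin n)) ∈ S.faces ∧ ¬ S.HasEdge c d ∧
    T.faces = flipFaces S.faces a b c d

/-- `T` is obtained from `S` by a single edge flip. -/
def Flip (S T : Sphere2 n) : Prop := ∃ a b c d : Fin n, IsFlipOf S T a b c d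

/-- A flag 2-sphere: distinct from the boundary of the tetrahedron (which is the
only triangulated 2-sphere with at most 4 vertices) and every 3-cycle of the
edge graph bounds a triangle. -/
def IsFlag (S : Sphere2 n) : Prop :=
  4 < n ∧ ∀ a b c : Fin n, S.HasEdge a b → S.HasEdge b c → S.HasEdge a c →
    ({a, b, c} : Finset (Fin n)) ∈ S.faces

/-- `S` is (isomorphic to) the double cone `Γ_n`: there are two non-adjacent
vertices such that every triangle contains one of them. -/
def IsDoubleCone (S : Sphere2 n) : Prop :=
  ∃ v w : Fin n, v ≠ w ∧ ¬ S.HasEdge v w ∧ ∀ t ∈ S.faces, v ∈ t ∨ w ∈ t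

/-- One step in the Pachner graph of `n`-vertex flag 2-spheres: an edge flip
between flag 2-spheres (in either direction), or a combinatorial isomorphism
(nodes are isomorphism classes). -/
def FlagStep (S T : Sphere2 n) : Prop :=
  IsFlag S ∧ IsFlag T ∧ (Flip S T ∨ Flip T S ∨ Sphere2.Iso S T)

/-- `S ∼ T` : `S` and `T` are connected in the Pachner graph of `n`-vertex flag
2-spheres, i.e. joined by a sequence of edge flips all whose intermediate
triangulations are `n`-vertex flag 2-spheres. -/
def FlagConn (S T : Sphere2 n) : Prop := Relation.ReflTransGen FlagStep S T

/-! ### Quadrilaterals in triangulated 2-spheres -/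

/-- The boundary edges of a subcomplex `Q` (given by a set of triangles):
the edges lying in exactly one triangle of `Q`. -/
def bdryEdges (Q : Finset (Finset (Fin n))) : Finset (Finset (Fin n)) :=
  (Q.biUnion fun t => t.powersetCard 2).filter fun e =>
    (Q.filter fun t => e ⊆ t).card = 1

/-- The edge set of the 4-cycle `a-b-c-d-a`. -/
def quadCycle (a b c d : Fin n) : Finset (Finset (Fin n)) :=
  {{a, b}, {b, c}, {c, d}, {d, a}}

/-- `Q` is a quadrilateral in `T` with boundary 4-cycle `a-b-c-d-a`: a
subcomplex of `T` which is a triangulated disc whose boundary is the 4-cycle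
`a-b-c-d-a` (connected, with boundary edges exactly the 4-cycle). -/
def IsQuad (T : Sphere2 n) (Q : Finset (Finset (Fin n))) (a b c d : Fin n) :
    Prop :=
  Q ⊆ T.faces ∧ Q.Nonempty ∧ [a, b, c, d].Pairwise (· ≠ ·) ∧
  bdryEdges Q = quadCycle a b c d ∧
  ∀ s ∈ Q, ∀ t ∈ Q,
    Relation.ReflTransGen
      (fun x y : Finset (Fin n) => x ∈ Q ∧ y ∈ Q ∧ (x ∩ y).card = 2) s t

/-- The interior vertices of a quadrilateral with boundary vertices
`a, b, c, d`. -/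
def quadInterior (Q : Finset (Finset (Fin n))) (a b c d : Fin n) :
    Finset (Fin n) :=
  Q.biUnion id \ {a, b, c, d}

/-- An ordered quadrilateral: it has interior vertices, and all interior
vertices have degree four (in the ambient sphere). -/
def IsOrderedQuad (T : Sphere2 n) (Q : Finset (Finset (Fin n)))
    (a b c d : Fin n) : Prop :=
  IsQuad T Q a b c d ∧ (quadInterior Q a b c d).Nonempty ∧
    ∀ v ∈ quadInterior Q a b c d, T.degree v = 4

/-- A proper quadrilateral: its boundary 4-cycle `a-b-c-d-a` is induced in `T`
and all four boundary vertices have degree at least five. -/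
def IsProperQuad (T : Sphere2 n) (Q : Finset (Finset (Fin n)))
    (a b c d : Fin n) : Prop :=
  IsQuad T Q a b c d ∧ ¬ T.HasEdge a c ∧ ¬ T.HasEdge b d ∧
    5 ≤ T.degree a ∧ 5 ≤ T.degree b ∧ 5 ≤ T.degree c ∧ 5 ≤ T.degree d

/-- The diagonal path of the ordered quadrilateral `Q` has an endpoint at the
boundary vertex `v`: exactly one interior vertex of `Q` is adjacent to `v`. -/
def DiagEndAt (T : Sphere2 n) (Q : Finset (Finset (Fin n))) (a b c d : Fin n)
    (v : Fin n) : Prop :=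
  v ∈ ({a, b, c, d} : Finset (Fin n)) ∧
    ∃! u : Fin n, u ∈ quadInterior Q a b c d ∧ T.HasEdge v u

/-! ### Stacked 3-balls and stacked 2-spheres -/

/-- A stacked 3-ball, given by its set of tetrahedra: obtained from a single
tetrahedron by repeatedly gluing a new tetrahedron (with a fresh apex) onto a
boundary triangle. -/
inductive IsStackedBall : Finset (Finset (Fin n)) → Prop
  | single (t : Finset (Fin n)) (ht : t.card = 4) : IsStackedBall {t}
  | glue (B : Finset (Finset (Fin n))) (t : Finset (Fin n)) (x : Fin n)
      (hB : IsStackedBall B) (ht : t.card = 3)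
      (hbd : (B.filter fun τ => t ⊆ τ).card = 1)
      (hx : ∀ τ ∈ B, x ∉ τ) :
      IsStackedBall (insert (insert x t) B)

/-- The boundary triangles of a complex `B` given by a set of tetrahedra:
the triangles lying in exactly one tetrahedron of `B`. -/
def bdry (B : Finset (Finset (Fin n))) : Finset (Finset (Fin n)) :=
  (B.biUnion fun τ => τ.powersetCard 3).filter fun s =>
    (B.filter fun τ => s ⊆ τ).card = 1

/-- A stacked 2-sphere: a triangulated 2-sphere which is the boundary of a
stacked 3-ball. -/
def IsStacked (S : Sphere2 n) : Prop :=
  ∃ B : Finset (Finset (Fin n)), IsStackedBall B ∧ S.faces = bdry B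

/-- The degree of the node `σ` in the dual graph `Λ(B)` of `B`: the number of
tetrahedra of `B` sharing a triangle with `σ`. -/
def dualDeg (B : Finset (Finset (Fin n))) (σ : Finset (Fin n)) : ℕ :=
  (B.filter fun τ => τ ≠ σ ∧ (τ ∩ σ).card = 3).card

/-- One step in the Pachner graph `𝓢_n` of `n`-vertex stacked 2-spheres. -/
def StackedStep (S T : Sphere2 n) : Prop :=
  IsStacked S ∧ IsStacked T ∧ (Flip S T ∨ Flip T S ∨ Sphere2.Iso S T)

/-- Connectivity in the Pachner graph `𝓢_n` of `n`-vertex stacked 2-spheres. -/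
def StackedConn (S T : Sphere2 n) : Prop := Relation.ReflTransGen StackedStep S T

/-- One step in the dual graph `Λ(B)` with the node `σ` deleted. -/
def DualStepAvoiding (B : Finset (Finset (Fin n))) (σ : Finset (Fin n))
    (x y : Finset (Fin n)) : Prop :=
  x ∈ B ∧ y ∈ B ∧ x ≠ σ ∧ y ≠ σ ∧ x ≠ y ∧ (x ∩ y).card = 3

/-- Reachability in the dual graph `Λ(B)` with the node `σ` deleted. -/
def DualReachAvoiding (B : Finset (Finset (Fin n))) (σ x y : Finset (Fin n)) :
    Prop :=
  Relation.ReflTransGen (DualStepAvoiding B σ) x y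

/-- One step (adjacency) in the dual graph `Λ(B)`. -/
def DualStep (B : Finset (Finset (Fin n))) (x y : Finset (Fin n)) : Prop :=
  x ∈ B ∧ y ∈ B ∧ x ≠ y ∧ (x ∩ y).card = 3

/-- The dual graph `Λ(B)` is a path: connected, all degrees at most two, and
some node of degree at most one. -/
def DualIsPath (B : Finset (Finset (Fin n))) : Prop :=
  (∀ σ ∈ B, dualDeg B σ ≤ 2) ∧
  (∀ σ ∈ B, ∀ τ ∈ B, Relation.ReflTransGen (DualStep B) σ τ) ∧
  (∃ σ ∈ B, dualDeg B σ ≤ 1)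

/-- `S` belongs to `𝓢ₙ⁰`: `S` is a stacked 2-sphere whose (unique) stacked
3-ball has a dual graph with no node of degree four. -/
def NoDeg4 (S : Sphere2 n) : Prop :=
  IsStacked S ∧ ∀ B : Finset (Finset (Fin n)), IsStackedBall B →
    S.faces = bdry B → ∀ σ ∈ B, dualDeg B σ ≠ 4

/-- One step in the Pachner graph `𝓢ₙ⁰`. -/
def Step0 (S T : Sphere2 n) : Prop :=
  NoDeg4 S ∧ NoDeg4 T ∧ (Flip S T ∨ Flip T S ∨ Sphere2.Iso S T)

/-- Reachability between vertices in the subcomplex of `B` induced on the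
vertices outside `t`. -/
def inducedReach (B : Finset (Finset (Fin n))) (t : Finset (Fin n))
    (x y : Fin n) : Prop :=
  Relation.ReflTransGen
    (fun u v : Fin n => u ≠ v ∧ u ∉ t ∧ v ∉ t ∧ ∃ τ ∈ B, u ∈ τ ∧ v ∈ τ) x y

/-- The tetrahedra of the clique complex of the edge graph of `S`:
all 4-cliques of the edge graph. -/
def cliqueTets (S : Sphere2 n) : Finset (Finset (Fin n)) :=
  (Finset.univ.powersetCard 4).filter fun τ =>
    ∀ u ∈ τ, ∀ v ∈ τ, u ≠ v → S.HasEdge u v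

/-! ### Trees with maximum node-degree four, and counting components -/

/-- Trees on `m` nodes with all node-degrees at most four. -/
abbrev DegLe4Tree (m : ℕ) : Type :=
  {G : SimpleGraph (Fin m) // G.IsTree ∧ ∀ v, (G.neighborSet v).ncard ≤ 4}

/-- Trees up to graph isomorphism. -/
def treeSetoid (m : ℕ) : Setoid (DegLe4Tree m) :=
  Relation.EqvGen.setoid fun G H => Nonempty (G.1 ≃g H.1)

/-- `t(m)`: the number of isomorphism classes of trees on `m` nodes with
maximum node-degree at most four. -/
noncomputable def numDeg4Trees (m : ℕ) : ℕ := Nat.card (Quotient (treeSetoid m))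

/-- Stacked 2-spheres modulo connectivity in the Pachner graph `𝓢_n`
(nodes of `𝓢_n` are isomorphism classes, arcs are edge flips). -/
def stackedSetoid (n : ℕ) : Setoid {S : Sphere2 n // IsStacked S} :=
  Relation.EqvGen.setoid fun S T => Flip S.1 T.1 ∨ Sphere2.Iso S.1 T.1

/-- The number of connected components of the Pachner graph `𝓢_n` of
`n`-vertex stacked 2-spheres. -/
noncomputable def numStackedComponents (n : ℕ) : ℕ := Nat.card (Quotient (stackedSetoid n))


section SeparationAux

variable {n : ℕ}

private lemma inducedReach_mono {B B' : Finset (Finset (Fin n))} {t : Finset (Fin n)}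
    (hBB : B ⊆ B') {a b : Fin n} (h : inducedReach B t a b) :
    inducedReach B' t a b := by
  refine Relation.ReflTransGen.mono (fun u v h => ?_) a b h
  obtain ⟨h1, h2, h3, τ, hτ, h5, h6⟩ := h
  exact ⟨h1, h2, h3, τ, hBB hτ, h5, h6⟩

private lemma inducedReach_symm {B : Finset (Finset (Fin n))} {t : Finset (Fin n)}
    {a b : Fin n} (h : inducedReach B t a b) : inducedReach B t b a := by
  have hs : Symmetric (fun u v : Fin n => u ≠ v ∧ u ∉ t ∧ v ∉ t ∧ ∃ τ ∈ B, u ∈ τ ∧ v ∈ τ) := by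
    rintro u v ⟨h1, h2, h3, τ, hτ, h5, h6⟩
    exact ⟨h1.symm, h3, h2, τ, hτ, h6, h5⟩
  exact (@Relation.ReflTransGen.stdSymm _ _ ⟨fun a b h => hs h⟩).symm a b h

/-- A stacked ball minus at most two vertices is connected. -/
private lemma removeTwo {B : Finset (Finset (Fin n))} (hB : IsStackedBall B)
    {e : Finset (Fin n)} (he : e.card ≤ 2) :
    ∀ a b : Fin n, a ∉ e → b ∉ e → (∃ τ ∈ B, a ∈ τ) → (∃ τ ∈ B, b ∈ τ) →
      inducedReach B e a b := by
  induction hB with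
  | single τ hτ =>
    rintro a b ha hb ⟨τa, hτa, haτ⟩ ⟨τb, hτb, hbτ⟩
    rw [mem_singleton] at hτa hτb
    rw [hτa] at haτ; rw [hτb] at hbτ
    rcases eq_or_ne a b with rfl | hab
    · exact Relation.ReflTransGen.refl
    · exact Relation.ReflTransGen.single ⟨hab, ha, hb, τ, mem_singleton_self τ, haτ, hbτ⟩
  | glue B s x hB hs hbd hx ih =>
    intro a b ha hb haB hbB
    obtain ⟨σ, hσeq⟩ := card_eq_one.mp hbd
    have hσmem : σ ∈ B.filter fun τ => s ⊆ τ := hσeq ▸ mem_singleton_self σ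
    have hσB : σ ∈ B := (mem_filter.mp hσmem).1
    have hsσ : s ⊆ σ := (mem_filter.mp hσmem).2
    have key : ∀ c : Fin n, c ∉ e → (∃ τ ∈ insert (insert x s) B, c ∈ τ) →
        ∃ c', c' ∉ e ∧ (∃ τ ∈ B, c' ∈ τ) ∧
          inducedReach (insert (insert x s) B) e c c' := by
      rintro c hc ⟨τ, hτ, hcτ⟩
      rcases mem_insert.mp hτ with rfl | hτB
      · rcases mem_insert.mp hcτ with hcx | hcs
        · subst hcx
          have hse : (s \ e).Nonempty := by
            rw [← card_pos]
            have h1 := le_card_sdiff e s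
            omega
          obtain ⟨y, hy⟩ := hse
          have hys := (mem_sdiff.mp hy).1
          have hye := (mem_sdiff.mp hy).2
          have hxy : c ≠ y := fun h => hx σ hσB (h ▸ hsσ hys)
          exact ⟨y, hye, ⟨σ, hσB, hsσ hys⟩,
            Relation.ReflTransGen.single ⟨hxy, hc, hye, insert c s,
              mem_insert_self _ _, mem_insert_self c s, mem_insert_of_mem hys⟩⟩
        · exact ⟨c, hc, ⟨σ, hσB, hsσ hcs⟩, Relation.ReflTransGen.refl⟩
      · exact ⟨c, hc, ⟨τ, hτB, hcτ⟩, Relation.ReflTransGen.refl⟩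
    obtain ⟨a', ha', haB', haa⟩ := key a ha haB
    obtain ⟨b', hb', hbB', hbb⟩ := key b hb hbB
    exact (haa.trans (inducedReach_mono (subset_insert _ _) (ih a' b' ha' hb' haB' hbB'))).trans
      (inducedReach_symm hbb)

/-- If `t` is a boundary triangle of a stacked ball with apex `v`, every vertex
outside `t` reaches `v` in the induced subcomplex. -/
private lemma bdryReach {B : Finset (Finset (Fin n))} (hB : IsStackedBall B) :
    ∀ t : Finset (Fin n), ∀ v : Fin n, t.card = 3 →
      (B.filter fun τ => t ⊆ τ).card = 1 → v ∉ t → insert v t ∈ B →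
      ∀ w : Fin n, w ∉ t → (∃ τ ∈ B, w ∈ τ) → inducedReach B t w v := by
  induction hB with
  | single τ hτ =>
    rintro t v ht hft hv hvt w hw ⟨τw, hτw, hwτ⟩
    rw [mem_singleton] at hvt hτw
    subst hτw; subst hvt
    rcases mem_insert.mp hwτ with rfl | h
    · exact Relation.ReflTransGen.refl
    · exact absurd h hw
  | glue B s x hB hs hbd hx ih =>
    intro t v ht hft hv hvt w hw hwB
    obtain ⟨σ, hσeq⟩ := card_eq_one.mp hbd
    have hσmem : σ ∈ B.filter fun τ => s ⊆ τ := hσeq ▸ mem_singleton_self σ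
    have hσB : σ ∈ B := (mem_filter.mp hσmem).1
    have hsσ : s ⊆ σ := (mem_filter.mp hσmem).2
    by_cases hxt : x ∈ t
    · -- the removed triangle contains the fresh apex
      have hvB' : insert v t = insert x s := by
        rcases mem_insert.mp hvt with h | h
        · exact h
        · exact absurd (mem_insert_of_mem hxt) (hx _ h)
      have hvs : v ∈ s := by
        have : v ∈ insert x s := hvB' ▸ mem_insert_self v t
        rcases mem_insert.mp this with h | h
        · exact absurd (h ▸ hxt) hv
        · exact h
      set e : Finset (Fin n) := t.erase x with hedef
      have he2 : e.card = 2 := by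
        rw [hedef, card_erase_of_mem hxt, ht]
      have het : e ⊆ t := erase_subset x t
      have hwx : w ≠ x := fun h => hw (h ▸ hxt)
      have hwOld : ∃ τ ∈ B, w ∈ τ := by
        obtain ⟨τ, hτ, hwτ⟩ := hwB
        rcases mem_insert.mp hτ with rfl | hτB
        · rcases mem_insert.mp hwτ with h | h
          · exact absurd h hwx
          · exact ⟨σ, hσB, hsσ h⟩
        · exact ⟨τ, hτB, hwτ⟩
      have hreach : inducedReach B e w v :=
        removeTwo hB (le_of_eq he2) w v (fun h => hw (het h)) (fun h => hv (het h))
          hwOld ⟨σ, hσB, hsσ hvs⟩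
      refine Relation.ReflTransGen.mono (fun p q hpq => ?_) w v hreach
      obtain ⟨h1, h2, h3, τ, hτ, h5, h6⟩ := hpq
      have hpt : p ∉ t := by
        intro hp
        exact h2 (mem_erase.mpr ⟨fun h => hx τ hτ (h ▸ h5), hp⟩)
      have hqt : q ∉ t := by
        intro hq
        exact h3 (mem_erase.mpr ⟨fun h => hx τ hτ (h ▸ h6), hq⟩)
      exact ⟨h1, hpt, hqt, τ, mem_insert_of_mem hτ, h5, h6⟩
    · by_cases hts : t ⊆ insert x s
      · exfalso
        have hts' : t = s := by
          apply Finset.eq_of_subset_of_card_le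
          · intro y hy
            rcases mem_insert.mp (hts hy) with rfl | h
            · exact absurd hy hxt
            · exact h
          · omega
        subst hts'
        have hnotB : insert x t ∉ B := fun h => hx _ h (mem_insert_self x t)
        rw [filter_insert, if_pos (subset_insert x t),
          card_insert_of_notMem (fun h => hnotB (mem_of_mem_filter _ h))] at hft
        omega
      · rw [filter_insert, if_neg hts] at hft
        have hvtB : insert v t ∈ B := by
          rcases mem_insert.mp hvt with h | h
          · exact absurd (by rw [← h]; exact subset_insert v t) hts
          · exact h
        have hst : (s \ t).Nonempty := by
          rw [sdiff_nonempty]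
          intro hsub
          have : s = t := Finset.eq_of_subset_of_card_le hsub (by omega)
          exact hts (this ▸ subset_insert x s)
        rcases eq_or_ne w x with rfl | hwx
        · obtain ⟨y, hy⟩ := hst
          have hys := (mem_sdiff.mp hy).1
          have hyt := (mem_sdiff.mp hy).2
          have hwy : w ≠ y := fun h => hx σ hσB (h ▸ hsσ hys)
          refine Relation.ReflTransGen.head
            ⟨hwy, hw, hyt, insert w s, mem_insert_self _ _, mem_insert_self w s,
              mem_insert_of_mem hys⟩ ?_
          exact inducedReach_mono (subset_insert _ _)
            (ih t v ht hft hv hvtB y hyt ⟨σ, hσB, hsσ hys⟩)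
        · have hwOld : ∃ τ ∈ B, w ∈ τ := by
            obtain ⟨τ, hτ, hwτ⟩ := hwB
            rcases mem_insert.mp hτ with rfl | hτB
            · rcases mem_insert.mp hwτ with h | h
              · exact absurd h hwx
              · exact ⟨σ, hσB, hsσ h⟩
            · exact ⟨τ, hτB, hwτ⟩
          exact inducedReach_mono (subset_insert _ _)
            (ih t v ht hft hv hvtB w hw hwOld)

/-- Projecting a path in the glued ball away from the fresh vertex `x`. -/
private lemma projPath {B : Finset (Finset (Fin n))} {s : Finset (Fin n)} {x : Fin n}
    {σ : Finset (Fin n)} (hσB : σ ∈ B) (hsσ : s ⊆ σ)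
    (hx : ∀ τ ∈ B, x ∉ τ) {t : Finset (Fin n)} {a b : Fin n}
    (h : inducedReach (insert (insert x s) B) t a b) (ha : a ≠ x) :
    (b ≠ x → inducedReach B t a b) ∧
      (b = x → ∃ y, y ∈ s ∧ y ∉ t ∧ inducedReach B t a y) := by
  induction h with
  | refl => exact ⟨fun _ => Relation.ReflTransGen.refl, fun hbx => absurd hbx ha⟩
  | @tail m b h1 step ih =>
    obtain ⟨hmb, hmt, hbt, τ, hτ, hmτ, hbτ⟩ := step
    constructor
    · intro hbx
      by_cases hmx : m = x
      · subst hmx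
        have hτs : τ = insert m s := by
          rcases mem_insert.mp hτ with h | h
          · exact h
          · exact absurd hmτ (hx τ h)
        have hbs : b ∈ s := by
          rcases mem_insert.mp (hτs ▸ hbτ) with h | h
          · exact absurd h hbx
          · exact h
        obtain ⟨y, hys, hyt, hay⟩ := ih.2 rfl
        rcases eq_or_ne y b with rfl | hyb
        · exact hay
        · exact hay.tail ⟨hyb, hyt, hbt, σ, hσB, hsσ hys, hsσ hbs⟩
      · have hreach := ih.1 hmx
        rcases mem_insert.mp hτ with rfl | hτB
        · have hms : m ∈ s := by
            rcases mem_insert.mp hmτ with h | h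
            · exact absurd h hmx
            · exact h
          have hbs : b ∈ s := by
            rcases mem_insert.mp hbτ with h | h
            · exact absurd h hbx
            · exact h
          exact hreach.tail ⟨hmb, hmt, hbt, σ, hσB, hsσ hms, hsσ hbs⟩
        · exact hreach.tail ⟨hmb, hmt, hbt, τ, hτB, hmτ, hbτ⟩
    · intro hbx
      subst hbx
      have hmx : m ≠ b := hmb
      have hτs : τ = insert b s := by
        rcases mem_insert.mp hτ with h | h
        · exact h
        · exact absurd hbτ (hx τ h)
      have hms : m ∈ s := by
        rcases mem_insert.mp (hτs ▸ hmτ) with h | h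
        · exact absurd h hmx
        · exact h
      exact ⟨m, hms, hmt, ih.1 hmx⟩

/-- The key case: the interior triangle is exactly the gluing triangle. -/
private lemma keyB {B : Finset (Finset (Fin n))} (hB : IsStackedBall B)
    {t : Finset (Fin n)} {x v : Fin n} (ht : t.card = 3)
    (hft : (B.filter fun τ => t ⊆ τ).card = 1) (hx : ∀ τ ∈ B, x ∉ τ)
    (hv : v ∉ t) (hxt : x ∉ t) (hxv : x ≠ v) (hvB : insert v t ∈ B) :
    ¬ inducedReach (insert (insert x t) B) t x v ∧
      ∀ w : Fin n, w ∉ t → (∃ τ ∈ insert (insert x t) B, w ∈ τ) →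
        inducedReach (insert (insert x t) B) t w x ∨
          inducedReach (insert (insert x t) B) t w v := by
  constructor
  · intro h
    rcases Relation.ReflTransGen.cases_head h with heq | ⟨c, hstep, _⟩
    · exact hxv heq
    · obtain ⟨hxc, _, hct, τ, hτ, hxτ, hcτ⟩ := hstep
      rcases mem_insert.mp hτ with rfl | hτB
      · rcases mem_insert.mp hcτ with h' | h'
        · exact hxc h'.symm
        · exact hct h'
      · exact hx τ hτB hxτ
  · intro w hw hwB
    rcases eq_or_ne w x with rfl | hwx
    · exact Or.inl Relation.ReflTransGen.refl
    · right
      have hwOld : ∃ τ ∈ B, w ∈ τ := by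
        obtain ⟨τ, hτ, hwτ⟩ := hwB
        rcases mem_insert.mp hτ with rfl | hτB
        · rcases mem_insert.mp hwτ with h | h
          · exact absurd h hwx
          · exact absurd h hw
        · exact ⟨τ, hτB, hwτ⟩
      exact inducedReach_mono (subset_insert _ _)
        (bdryReach hB t v ht hft hv hvB w hw hwOld)

private lemma mainLemma {B : Finset (Finset (Fin n))} (hB : IsStackedBall B) :
    ∀ t : Finset (Fin n), ∀ u v : Fin n, t.card = 3 →
      (B.filter fun τ => t ⊆ τ).card = 2 → u ∉ t → v ∉ t → u ≠ v →
      insert u t ∈ B → insert v t ∈ B →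
      ¬ inducedReach B t u v ∧
        ∀ w : Fin n, w ∉ t → (∃ τ ∈ B, w ∈ τ) →
          inducedReach B t w u ∨ inducedReach B t w v := by
  induction hB with
  | single τ hτ =>
    intro t u v ht hft hu hv huv hut hvt
    exfalso
    have h1 : (({τ} : Finset (Finset (Fin n))).filter fun τ' => t ⊆ τ').card ≤ 1 := by
      refine le_trans (card_le_card (filter_subset _ _)) ?_
      simp
    omega
  | glue B s x hB hs hbd hx ih =>
    intro t u v ht hft hu hv huv hut hvt
    obtain ⟨σ, hσeq⟩ := card_eq_one.mp hbd
    have hσmem : σ ∈ B.filter fun τ => s ⊆ τ := hσeq ▸ mem_singleton_self σ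
    have hσB : σ ∈ B := (mem_filter.mp hσmem).1
    have hsσ : s ⊆ σ := (mem_filter.mp hσmem).2
    by_cases hxt : x ∈ t
    · exfalso
      have hsub : (insert (insert x s) B).filter (fun τ => t ⊆ τ) ⊆ {insert x s} := by
        intro τ hτ
        rw [mem_filter] at hτ
        rcases mem_insert.mp hτ.1 with rfl | hτB
        · exact mem_singleton_self _
        · exact absurd (hτ.2 hxt) (hx τ hτB)
      have h1 := card_le_card hsub
      rw [card_singleton] at h1
      omega
    by_cases hts : t ⊆ insert x s
    · -- t is the gluing triangle
      have hts' : t = s := by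
        apply Finset.eq_of_subset_of_card_le
        · intro y hy
          rcases mem_insert.mp (hts hy) with rfl | h
          · exact absurd hy hxt
          · exact h
        · omega
      subst hts'
      have hσne : insert x t ≠ σ := fun h => hx σ hσB (h ▸ mem_insert_self x t)
      have hnotB : insert x t ∉ B := fun h => hx _ h (mem_insert_self x t)
      have hmemF : ∀ τ : Finset (Fin n),
          τ ∈ (insert (insert x t) B).filter (fun τ => t ⊆ τ) ↔
            τ = insert x t ∨ τ = σ := by
        intro τ
        rw [filter_insert, if_pos (subset_insert x t), hσeq]
        simp [mem_insert, mem_singleton]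
      have hEq : ∀ a : Fin n, a ∉ t → insert a t = insert x t → a = x := by
        intro a haT h
        have : a ∈ insert x t := h ▸ mem_insert_self a t
        rcases mem_insert.mp this with h' | h'
        · exact h'
        · exact absurd h' haT
      have hEqσ : ∀ a b : Fin n, a ∉ t → b ∉ t → insert a t = σ → insert b t = σ → a = b := by
        intro a b haT hbT hA hBo
        have : a ∈ insert b t := by rw [hBo, ← hA]; exact mem_insert_self a t
        rcases mem_insert.mp this with h' | h'
        · exact h'
        · exact absurd h' haT
      have huF : insert u t = insert x t ∨ insert u t = σ :=
        (hmemF _).mp (mem_filter.mpr ⟨hut, subset_insert u t⟩)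
      have hvF : insert v t = insert x t ∨ insert v t = σ :=
        (hmemF _).mp (mem_filter.mpr ⟨hvt, subset_insert v t⟩)
      rcases huF with hu1 | hu2
      · have hux : u = x := hEq u hu hu1
        subst hux
        have hvσ : insert v t = σ := by
          rcases hvF with h | h
          · exact absurd (hEq v hv h).symm huv
          · exact h
        exact keyB hB ht hbd hx hv hxt huv (hvσ ▸ hσB)
      · have hvx : v = x := by
          rcases hvF with h | h
          · exact hEq v hv h
          · exact absurd (hEqσ u v hu hv hu2 h) huv
        subst hvx
        have huB : insert u t ∈ B := hu2 ▸ hσB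
        obtain ⟨h1, h2⟩ := keyB hB ht hbd hx hu hxt (Ne.symm huv) huB
        refine ⟨fun h => h1 (inducedReach_symm h), fun w hw hwB => (h2 w hw hwB).symm⟩
    · -- t is an interior triangle of the smaller ball
      have hft' : (B.filter fun τ => t ⊆ τ).card = 2 := by
        rwa [filter_insert, if_neg hts] at hft
      have hne : ∀ a : Fin n, insert a t ∈ insert (insert x s) B → insert a t ∈ B := by
        intro a h
        rcases mem_insert.mp h with h' | h'
        · exact absurd (by rw [← h']; exact subset_insert a t) hts
        · exact h'
      have hutB := hne u hut
      have hvtB := hne v hvt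
      obtain ⟨ih1, ih2⟩ := ih t u v ht hft' hu hv huv hutB hvtB
      have hux : u ≠ x := fun h => hx _ hutB (h ▸ mem_insert_self u t)
      have hvx : v ≠ x := fun h => hx _ hvtB (h ▸ mem_insert_self v t)
      constructor
      · intro h
        exact ih1 ((projPath hσB hsσ hx h hux).1 hvx)
      · intro w hw hwB
        rcases eq_or_ne w x with rfl | hwx
        · have hst : (s \ t).Nonempty := by
            rw [sdiff_nonempty]
            intro hsub
            have : s = t := Finset.eq_of_subset_of_card_le hsub (by omega)
            exact hts (this ▸ subset_insert w s)
          obtain ⟨y, hy⟩ := hst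
          have hys := (mem_sdiff.mp hy).1
          have hyt := (mem_sdiff.mp hy).2
          have hwy : w ≠ y := fun h => hx σ hσB (h ▸ hsσ hys)
          have hstep : Relation.ReflTransGen
              (fun p q : Fin n => p ≠ q ∧ p ∉ t ∧ q ∉ t ∧
                ∃ τ ∈ insert (insert w s) B, p ∈ τ ∧ q ∈ τ) w y :=
            Relation.ReflTransGen.single ⟨hwy, hw, hyt, insert w s,
              mem_insert_self _ _, mem_insert_self w s, mem_insert_of_mem hys⟩
          rcases ih2 y hyt ⟨σ, hσB, hsσ hys⟩ with h | h
          · exact Or.inl (hstep.trans (inducedReach_mono (subset_insert _ _) h))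
          · exact Or.inr (hstep.trans (inducedReach_mono (subset_insert _ _) h))
        · have hwOld : ∃ τ ∈ B, w ∈ τ := by
            obtain ⟨τ, hτ, hwτ⟩ := hwB
            rcases mem_insert.mp hτ with rfl | hτB
            · rcases mem_insert.mp hwτ with h | h
              · exact absurd h hwx
              · exact ⟨σ, hσB, hsσ h⟩
            · exact ⟨τ, hτB, hwτ⟩
          rcases ih2 w hw hwOld with h | h
          · exact Or.inl (inducedReach_mono (subset_insert _ _) h)
          · exact Or.inr (inducedReach_mono (subset_insert _ _) h)

end SeparationAux

/-- If `t` is an interior triangle of a stacked 3-ball `B`,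
then the subcomplex of `B` induced on the vertices outside `t` has exactly two
connected components, and the apices `u`, `v` of the two tetrahedra of `B`
containing `t` lie in different components. -/
theorem stacked_ball_interior_triangle_separates (n : ℕ)
    (B : Finset (Finset (Fin n))) (hB : IsStackedBall B)
    (t : Finset (Fin n)) (ht : t.card = 3)
    (hint : (B.filter fun τ => t ⊆ τ).card = 2)
    (u v : Fin n) (hu : u ∉ t) (hv : v ∉ t) (huv : u ≠ v)
    (hut : insert u t ∈ B) (hvt : insert v t ∈ B) :
    ¬ inducedReach B t u v ∧
      ∀ w : Fin n, w ∉ t → (∃ τ ∈ B, w ∈ τ) →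
        inducedReach B t w u ∨ inducedReach B t w v := by
  exact mainLemma hB t u v ht hint hu hv huv hut hvt

end PachnerSpheres
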